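/- Let Φ : M_r → M_n be a linear map and let 1 ≤ k ≤ n. Then sup over all m ≥ 1 and all X ∈ M_m ⊗ M_r with ‖X‖ ≤ 1 of ‖(id_m ⊗ Φ)(X)‖_{S(k)} equals sup{ ‖(id_k ⊗ Φ)(X)‖ : X ∈ M_k ⊗ M_r with ‖X‖ ≤ 1 }. (This is Theorem 6.1: the completely bounded norm from M_r to the k-minimal operator space MIN^k(M_n) stabilizes and equals ‖id_k ⊗ Φ‖.) -/

import Mathlib

open scoped ComplexOrder Kronecker
open Matrix

noncomputable section

/-- The standard inner product `⟨v, w⟩ = ∑ conj(vᵢ) wᵢ` on `I → ℂ`. -/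
def inprod {I : Type*} [Fintype I] (v w : I → ℂ) : ℂ :=
  ∑ i, (starRingEnd ℂ) (v i) * w i

/-- `v` is a unit vector. -/
def UnitVec {I : Type*} [Fintype I] (v : I → ℂ) : Prop :=
  inprod v v = 1

/-- The Schmidt rank of a vector in `ℂ^I ⊗ ℂ^J`, i.e. the rank of the associated
`I × J` coefficient matrix. -/
noncomputable def SchmidtRank {I J : Type*} [Fintype I] [Fintype J] (v : I × J → ℂ) : ℕ :=
  (Matrix.of fun i j => v (i, j)).rank

/-- The operator norm (largest singular value) of a matrix, as
`sup { |⟨v, A w⟩| : v, w unit vectors }`. -/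
noncomputable def opNorm {I J : Type*} [Fintype I] [Fintype J] (A : Matrix I J ℂ) : ℝ :=
  sSup { t : ℝ | ∃ v w, UnitVec v ∧ UnitVec w ∧ t = ‖inprod v (A.mulVec w)‖ }

/-- The `S(k)`-norm of `X ∈ M_I ⊗ M_J`. -/
noncomputable def SNorm {I J : Type*} [Fintype I] [Fintype J] (k : ℕ)
    (X : Matrix (I × J) (I × J) ℂ) : ℝ :=
  sSup { t : ℝ | ∃ v w : I × J → ℂ, UnitVec v ∧ UnitVec w ∧
    SchmidtRank v ≤ k ∧ SchmidtRank w ≤ k ∧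
    t = ‖inprod v (X.mulVec w)‖ }

/-- `X` is a `k`-block positive (Hermitian) operator: `⟨v, X v⟩ ≥ 0` for every
vector of Schmidt rank at most `k`. -/
def kBlockPos {I J : Type*} [Fintype I] [Fintype J] (k : ℕ)
    (X : Matrix (I × J) (I × J) ℂ) : Prop :=
  X.IsHermitian ∧ ∀ v : I × J → ℂ, SchmidtRank v ≤ k → 0 ≤ inprod v (X.mulVec v)

/-- `ρ` has Schmidt number at most `k` (in particular it is positive semidefinite):
it is a finite nonnegative combination of rank-one projections onto vectors of
Schmidt rank at most `k`. -/
def SchmidtNumberLE {I J : Type*} [Fintype I] [Fintype J] (k : ℕ)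
    (ρ : Matrix (I × J) (I × J) ℂ) : Prop :=
  ∃ (N : ℕ) (c : Fin N → ℝ) (v : Fin N → (I × J → ℂ)),
    (∀ i, 0 ≤ c i) ∧ (∀ i, SchmidtRank (v i) ≤ k) ∧
    ρ = ∑ i, (c i : ℂ) • Matrix.vecMulVec (v i) (star (v i))

/-- `id_I ⊗ Φ` : the map applying `Φ` to the second tensor factor. -/
noncomputable def tensorId {I : Type*} [Fintype I] {a b : ℕ}
    (Φ : Matrix (Fin a) (Fin a) ℂ →ₗ[ℂ] Matrix (Fin b) (Fin b) ℂ)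
    (X : Matrix (I × Fin a) (I × Fin a) ℂ) : Matrix (I × Fin b) (I × Fin b) ℂ :=
  Matrix.of fun p q => Φ (Matrix.of fun s t => X (p.1, s) (q.1, t)) p.2 q.2

/-- The trace norm `‖X‖_tr = Tr √(X^* X)`. -/
noncomputable def trNorm {I : Type*} [Fintype I] [DecidableEq I] (X : Matrix I I ℂ) : ℝ :=
  (((Matrix.posSemidef_conjTranspose_mul_self X).1.eigenvectorUnitary : Matrix I I ℂ) *
    Matrix.diagonal (((↑) : ℝ → ℂ) ∘ Real.sqrt ∘ (Matrix.posSemidef_conjTranspose_mul_self X).1.eigenvalues) *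
    (star ((Matrix.posSemidef_conjTranspose_mul_self X).1.eigenvectorUnitary : Matrix I I ℂ))).trace.re

end


section Helpers
variable {I J : Type*} [Fintype I] [Fintype J]

lemma inprod_self (v : I → ℂ) : inprod v v = ((∑ i, Complex.normSq (v i) : ℝ) : ℂ) := by
  simp [inprod, Complex.normSq_eq_conj_mul_self]

lemma unitVec_iff (v : I → ℂ) : UnitVec v ↔ (∑ i, Complex.normSq (v i)) = 1 := by
  rw [UnitVec, inprod_self]
  exact_mod_cast Complex.ofReal_eq_one

lemma inprod_mulVec_adj (A : Matrix I J ℂ) (x : J → ℂ) (y : I → ℂ) :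
    inprod (A.mulVec x) y = inprod x (Aᴴ.mulVec y) := by
  simp only [inprod, Matrix.mulVec, dotProduct, Matrix.conjTranspose_apply,
    map_sum, _root_.map_mul, Finset.mul_sum, Finset.sum_mul]
  rw [Finset.sum_comm]
  congr 1; ext j; congr 1; ext i
  simp only [Complex.star_def]
  ring
end Helpers

section OpNorm
variable {I J : Type*} [Fintype I] [Fintype J] [DecidableEq I] [DecidableEq J]

lemma unitVec_single (i0 : I) : UnitVec (Pi.single i0 1 : I → ℂ) := by
  simp [unitVec_iff, Pi.single_apply, apply_ite Complex.normSq, Finset.sum_ite_eq']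

lemma abs_of_unit_le (A : Matrix I J ℂ) {v : I → ℂ} {w : J → ℂ}
    (hv : UnitVec v) (hw : UnitVec w) :
    ‖inprod v (A.mulVec w)‖ ≤ ∑ i, ∑ j, ‖A i j‖ := by
  have hv1 : ∀ i, ‖v i‖ ≤ 1 := by
    intro i
    have h2 : Complex.normSq (v i) ≤ 1 := by
      rw [unitVec_iff] at hv
      calc Complex.normSq (v i) ≤ ∑ i, Complex.normSq (v i) :=
        Finset.single_le_sum (fun j _ => Complex.normSq_nonneg (v j)) (Finset.mem_univ i)
      _ = 1 := hv
    nlinarith [Complex.sq_norm (v i), norm_nonneg (v i)]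
  have hw1 : ∀ j, ‖w j‖ ≤ 1 := by
    intro j
    have h2 : Complex.normSq (w j) ≤ 1 := by
      rw [unitVec_iff] at hw
      calc Complex.normSq (w j) ≤ ∑ j, Complex.normSq (w j) :=
        Finset.single_le_sum (fun j _ => Complex.normSq_nonneg (w j)) (Finset.mem_univ j)
      _ = 1 := hw
    nlinarith [Complex.sq_norm (w j), norm_nonneg (w j)]
  calc ‖inprod v (A.mulVec w)‖ ≤
      ∑ i, ‖(starRingEnd ℂ) (v i) * A.mulVec w i‖ := norm_sum_le _ _
    _ ≤ ∑ i, ∑ j, ‖A i j‖ := by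
        apply Finset.sum_le_sum
        intro i _
        rw [norm_mul]
        calc ‖(starRingEnd ℂ) (v i)‖ * ‖A.mulVec w i‖
            ≤ 1 * ‖A.mulVec w i‖ := by
              apply mul_le_mul_of_nonneg_right _ (norm_nonneg _)
              simpa using hv1 i
          _ = ‖∑ j, A i j * w j‖ := by rw [one_mul]; rfl
          _ ≤ ∑ j, ‖A i j * w j‖ := norm_sum_le _ _
          _ ≤ ∑ j, ‖A i j‖ := by
              apply Finset.sum_le_sum
              intro j _
              rw [norm_mul]
              nlinarith [hw1 j, norm_nonneg (A i j), norm_nonneg (w j)]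

lemma bddAbove_opNormSet (A : Matrix I J ℂ) :
    BddAbove { t : ℝ | ∃ v w, UnitVec v ∧ UnitVec w ∧
      t = ‖inprod v (A.mulVec w)‖ } := by
  refine ⟨∑ i, ∑ j, ‖A i j‖, ?_⟩
  rintro t ⟨v, w, hv, hw, rfl⟩
  exact abs_of_unit_le A hv hw

lemma abs_le_opNorm (A : Matrix I J ℂ) {v : I → ℂ} {w : J → ℂ}
    (hv : UnitVec v) (hw : UnitVec w) :
    ‖inprod v (A.mulVec w)‖ ≤ opNorm A :=
  le_csSup (bddAbove_opNormSet A) ⟨v, w, hv, hw, rfl⟩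

lemma opNorm_nonneg [Nonempty I] [Nonempty J] (A : Matrix I J ℂ) : 0 ≤ opNorm A :=
  (norm_nonneg _).trans
    (abs_le_opNorm A (unitVec_single (Classical.arbitrary I)) (unitVec_single (Classical.arbitrary J)))

lemma opNorm_le [Nonempty I] [Nonempty J] (A : Matrix I J ℂ) {c : ℝ}
    (h : ∀ v w, UnitVec v → UnitVec w → ‖inprod v (A.mulVec w)‖ ≤ c) :
    opNorm A ≤ c := by
  apply csSup_le
  · exact ⟨_, Pi.single (Classical.arbitrary I) 1, Pi.single (Classical.arbitrary J) 1,
      unitVec_single _, unitVec_single _, rfl⟩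
  · rintro t ⟨v, w, hv, hw, rfl⟩; exact h v w hv hw

lemma entry_abs_le_opNorm (A : Matrix I J ℂ) (i : I) (j : J) :
    ‖A i j‖ ≤ opNorm A := by
  have h : inprod (Pi.single i 1) (A.mulVec (Pi.single j 1)) = A i j := by
    simp [inprod, Matrix.mulVec, dotProduct, Pi.single_apply, apply_ite (starRingEnd ℂ),
      Finset.sum_ite_eq', Finset.mul_sum, mul_ite, Finset.sum_ite_eq]
  have := abs_le_opNorm A (unitVec_single i) (unitVec_single j)
  rwa [h] at this

lemma opNorm_le_sum [Nonempty I] [Nonempty J] (A : Matrix I J ℂ) :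
    opNorm A ≤ ∑ i, ∑ j, ‖A i j‖ :=
  opNorm_le A fun v w hv hw => abs_of_unit_le A hv hw

lemma abs_inprod_le_one [Nonempty I] [Nonempty J] (A : Matrix I J ℂ)
    (hA : opNorm A ≤ 1) (u : I → ℂ) (z : J → ℂ)
    (hu : ∑ i, Complex.normSq (u i) ≤ 1) (hz : ∑ j, Complex.normSq (z j) ≤ 1) :
    ‖inprod u (A.mulVec z)‖ ≤ 1 := by
  rcases eq_or_lt_of_le (Finset.sum_nonneg fun i _ => Complex.normSq_nonneg (u i)) with h0 | hpos
  · have hu0 : u = 0 := by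
      funext i
      have := (Finset.sum_eq_zero_iff_of_nonneg fun i _ => Complex.normSq_nonneg (u i)).mp h0.symm
      exact Complex.normSq_eq_zero.mp (this i (Finset.mem_univ i))
    simp [hu0, inprod]
  rcases eq_or_lt_of_le (Finset.sum_nonneg fun j _ => Complex.normSq_nonneg (z j)) with h0 | hposz
  · have hz0 : z = 0 := by
      funext j
      have := (Finset.sum_eq_zero_iff_of_nonneg fun j _ => Complex.normSq_nonneg (z j)).mp h0.symm
      exact Complex.normSq_eq_zero.mp (this j (Finset.mem_univ j))
    simp [hz0, inprod]
  set su := ∑ i, Complex.normSq (u i) with hsu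
  set sz := ∑ j, Complex.normSq (z j) with hsz
  set a : ℝ := (Real.sqrt su)⁻¹ with ha
  set b : ℝ := (Real.sqrt sz)⁻¹ with hb
  have hsa : Real.sqrt su > 0 := Real.sqrt_pos.mpr hpos
  have hsb : Real.sqrt sz > 0 := Real.sqrt_pos.mpr hposz
  have hu' : UnitVec (fun i => (a : ℂ) * u i) := by
    rw [unitVec_iff]
    simp only [Complex.normSq_mul, Complex.normSq_ofReal]
    rw [← Finset.mul_sum, ← hsu]
    rw [ha]
    field_simp
    rw [Real.sq_sqrt hpos.le]
  have hz' : UnitVec (fun j => (b : ℂ) * z j) := by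
    rw [unitVec_iff]
    simp only [Complex.normSq_mul, Complex.normSq_ofReal]
    rw [← Finset.mul_sum, ← hsz]
    rw [hb]
    field_simp
    rw [Real.sq_sqrt hposz.le]
  have key : ‖inprod (fun i => (a:ℂ) * u i) (A.mulVec (fun j => (b:ℂ) * z j))‖
      ≤ 1 := le_trans (abs_le_opNorm A hu' hz') hA
  have hmul : inprod (fun i => (a:ℂ) * u i) (A.mulVec (fun j => (b:ℂ) * z j))
      = (a : ℂ) * (b : ℂ) * inprod u (A.mulVec z) := by
    have : (fun j => (b:ℂ) * z j) = (b:ℂ) • z := by funext j; simp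
    rw [this, Matrix.mulVec_smul]
    simp only [inprod, Pi.smul_apply, smul_eq_mul]
    rw [Finset.mul_sum]
    congr 1; funext i
    simp only [_root_.map_mul, Complex.conj_ofReal]
    ring
  rw [hmul, norm_mul, norm_mul, Complex.norm_real, Complex.norm_real, Real.norm_eq_abs, Real.norm_eq_abs] at key
  have h1 : ‖inprod u (A.mulVec z)‖ ≤ Real.sqrt su * Real.sqrt sz := by
    rw [ha, hb] at key
    rw [abs_of_pos (inv_pos.mpr hsa), abs_of_pos (inv_pos.mpr hsb)] at key
    calc ‖inprod u (A.mulVec z)‖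
        = (Real.sqrt su * Real.sqrt sz) * ((Real.sqrt su)⁻¹ * (Real.sqrt sz)⁻¹ *
            ‖inprod u (A.mulVec z)‖) := by
            rw [show (Real.sqrt su * Real.sqrt sz) * ((Real.sqrt su)⁻¹ * (Real.sqrt sz)⁻¹ *
              ‖inprod u (A.mulVec z)‖) = ((Real.sqrt su) * (Real.sqrt su)⁻¹) *
              ((Real.sqrt sz) * (Real.sqrt sz)⁻¹) * ‖inprod u (A.mulVec z)‖ by ring,
              mul_inv_cancel₀ hsa.ne', mul_inv_cancel₀ hsb.ne']
            ring
      _ ≤ (Real.sqrt su * Real.sqrt sz) * 1 := by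
          apply mul_le_mul_of_nonneg_left _ (by positivity)
          linarith [key]
      _ = Real.sqrt su * Real.sqrt sz := mul_one _
  have h2 : Real.sqrt su ≤ 1 := by
    rw [show (1:ℝ) = Real.sqrt 1 by simp]
    exact Real.sqrt_le_sqrt hu
  have h3 : Real.sqrt sz ≤ 1 := by
    rw [show (1:ℝ) = Real.sqrt 1 by simp]
    exact Real.sqrt_le_sqrt hz
  calc ‖inprod u (A.mulVec z)‖ ≤ Real.sqrt su * Real.sqrt sz := h1
    _ ≤ 1 * 1 := by
        apply mul_le_mul h2 h3 (Real.sqrt_nonneg _) (by norm_num)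
    _ = 1 := by norm_num
end OpNorm

section Compression

lemma sum_dite_fin {k d : ℕ} (hdk : d ≤ k) (G : Fin d → ℂ) :
    (∑ α : Fin k, if h : (α : ℕ) < d then G ⟨α, h⟩ else 0) = ∑ β : Fin d, G β := by
  calc (∑ α : Fin k, if h : (α : ℕ) < d then G ⟨α, h⟩ else 0)
      = ∑ a ∈ Finset.range k, (if h : a < d then G ⟨a, h⟩ else 0) :=
        Fin.sum_univ_eq_sum_range (fun a => if h : a < d then G ⟨a, h⟩ else 0) k
    _ = ∑ a ∈ Finset.range d, (if h : a < d then G ⟨a, h⟩ else 0) := by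
        refine (Finset.sum_subset (Finset.range_subset_range.mpr hdk) ?_).symm
        intro a _ ha
        rw [Finset.mem_range, not_lt] at ha
        rw [dif_neg (not_lt.mpr ha)]
    _ = ∑ β : Fin d, (if h : (β : ℕ) < d then G ⟨β, h⟩ else 0) :=
        (Fin.sum_univ_eq_sum_range (fun a => if h : a < d then G ⟨a, h⟩ else 0) d).symm
    _ = ∑ β : Fin d, G β := Finset.sum_congr rfl fun β _ => by rw [dif_pos β.isLt]

lemma exists_compression {m p k : ℕ} (M : Matrix (Fin m) (Fin p) ℂ) (hrk : M.rank ≤ k) :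
    ∃ V : Matrix (Fin m) (Fin k) ℂ,
      (∀ i c, (∑ α, V i α * (∑ j, (starRingEnd ℂ) (V j α) * M j c)) = M i c) ∧
      (∀ x : Fin k → ℂ, ∑ i, Complex.normSq (V.mulVec x i) ≤ ∑ α, Complex.normSq (x α)) := by
  classical
  set T : Submodule ℂ (EuclideanSpace ℂ (Fin m)) :=
    Submodule.map (show (Fin m → ℂ) ≃ₗ[ℂ] EuclideanSpace ℂ (Fin m) from
      (WithLp.linearEquiv 2 ℂ (Fin m → ℂ)).symm).toLinearMap (LinearMap.range M.mulVecLin) with hT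
  set d := Module.finrank ℂ T with hdd
  have hd : d ≤ k := by rw [hdd, hT, LinearEquiv.finrank_map_eq]; exact hrk
  set b := stdOrthonormalBasis ℂ T with hbb
  set V : Matrix (Fin m) (Fin k) ℂ := Matrix.of fun i α =>
    if h : (α : ℕ) < d then ((b ⟨α, h⟩ : T) : EuclideanSpace ℂ (Fin m)) i else 0 with hV
  have ortho : ∀ β γ : Fin d, (∑ j, (starRingEnd ℂ) (((b β : T) : EuclideanSpace ℂ (Fin m)) j) *
      ((b γ : T) : EuclideanSpace ℂ (Fin m)) j) = if β = γ then 1 else 0 := by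
    intro β γ
    have h := b.orthonormal
    rw [orthonormal_iff_ite] at h
    have h2 := h β γ
    rw [Submodule.coe_inner, PiLp.inner_apply] at h2
    simpa [RCLike.inner_apply, mul_comm] using h2
  have expand : ∀ u : EuclideanSpace ℂ (Fin m), u ∈ T → ∀ i,
      (∑ β : Fin d, (∑ j, (starRingEnd ℂ) (((b β : T) : EuclideanSpace ℂ (Fin m)) j) * u j) *
        ((b β : T) : EuclideanSpace ℂ (Fin m)) i) = u i := by
    intro u hu i
    have h := b.sum_repr ⟨u, hu⟩
    have h2 : ∀ β, b.repr ⟨u, hu⟩ β =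
        ∑ j, (starRingEnd ℂ) (((b β : T) : EuclideanSpace ℂ (Fin m)) j) * u j := by
      intro β
      rw [b.repr_apply_apply, Submodule.coe_inner, PiLp.inner_apply]
      simp [RCLike.inner_apply, mul_comm]
    have h3 := congrArg (fun y : T => (y : EuclideanSpace ℂ (Fin m)) i) h
    simp only at h3
    rw [← h3]
    rw [Submodule.coe_sum]
    rw [WithLp.ofLp_sum, Finset.sum_apply]
    congr 1
    funext β
    rw [h2 β]
    simp [Submodule.coe_smul]
  refine ⟨V, ?_, ?_⟩
  · intro i c
    have hcol : (WithLp.toLp 2 (fun j => M j c) : EuclideanSpace ℂ (Fin m)) ∈ T := by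
      refine ⟨fun j => M j c, ⟨Pi.single c 1, ?_⟩, rfl⟩
      have h1 : M.mulVecLin (Pi.single c 1) = Mᵀ c := by
        rw [Matrix.mulVecLin_apply, Matrix.mulVec_single_one]
        rfl
      exact h1.trans rfl
    have hterm : ∀ α : Fin k, V i α * (∑ j, (starRingEnd ℂ) (V j α) * M j c) =
        if h : (α : ℕ) < d then
          (∑ j, (starRingEnd ℂ) (((b ⟨α, h⟩ : T) : EuclideanSpace ℂ (Fin m)) j) * M j c) *
            ((b ⟨α, h⟩ : T) : EuclideanSpace ℂ (Fin m)) i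
        else 0 := by
      intro α
      by_cases h : (α : ℕ) < d
      · rw [dif_pos h]
        simp only [hV, Matrix.of_apply, dif_pos h]
        ring
      · rw [dif_neg h]
        simp only [hV, Matrix.of_apply, dif_neg h]
        ring
    rw [Finset.sum_congr rfl (fun α _ => hterm α),
      sum_dite_fin hd (fun γ : Fin d =>
        (∑ j, (starRingEnd ℂ) (((b γ : T) : EuclideanSpace ℂ (Fin m)) j) * M j c) *
          ((b γ : T) : EuclideanSpace ℂ (Fin m)) i)]
    exact expand _ hcol i
  · intro x
    have hVV : ∀ α : Fin k, (Vᴴ.mulVec (V.mulVec x)) α = if (α : ℕ) < d then x α else 0 := by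
      intro α
      simp only [Matrix.mulVec, dotProduct, Matrix.conjTranspose_apply]
      by_cases hα : (α : ℕ) < d
      · rw [if_pos hα]
        have : ∀ j : Fin m, star (V j α) * (∑ β : Fin k, V j β * x β) =
            ∑ β : Fin k, if h : (β : ℕ) < d then
              ((starRingEnd ℂ) (((b ⟨α, hα⟩ : T) : EuclideanSpace ℂ (Fin m)) j) *
                (((b ⟨β, h⟩ : T) : EuclideanSpace ℂ (Fin m)) j * x β)) else 0 := by
          intro j
          rw [Finset.mul_sum]
          congr 1
          funext β
          by_cases h : (β : ℕ) < d
          · rw [dif_pos h]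
            simp only [hV, Matrix.of_apply, dif_pos h, dif_pos hα, Complex.star_def]
            try ring
          · rw [dif_neg h]
            simp only [hV, Matrix.of_apply, dif_neg h]
            ring
        rw [Finset.sum_congr rfl fun j _ => this j, Finset.sum_comm]
        have : ∀ β : Fin k, (∑ j : Fin m, if h : (β : ℕ) < d then
            ((starRingEnd ℂ) (((b ⟨α, hα⟩ : T) : EuclideanSpace ℂ (Fin m)) j) *
              (((b ⟨β, h⟩ : T) : EuclideanSpace ℂ (Fin m)) j * x β)) else 0) =
            if h : (β : ℕ) < d then
              (if (⟨α, hα⟩ : Fin d) = ⟨β, h⟩ then 1 else 0) * x β else 0 := by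
          intro β
          by_cases h : (β : ℕ) < d
          · rw [dif_pos h]
            simp only [dif_pos h]
            rw [← ortho ⟨α, hα⟩ ⟨β, h⟩, Finset.sum_mul]
            congr 1; funext j; ring
          · simp only [dif_neg h, Finset.sum_const_zero]
        rw [Finset.sum_congr rfl fun β _ => this β]
        have hre : ∀ β : Fin k, (if h : (β : ℕ) < d then
            (if (⟨α, hα⟩ : Fin d) = ⟨β, h⟩ then 1 else 0) * x β else 0) =
            if β = α then x β else 0 := by
          intro β
          by_cases h : (β : ℕ) < d
          · rw [dif_pos h]
            by_cases he : β = α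
            · subst he
              simp
            · rw [if_neg he, if_neg, zero_mul]
              intro hc
              apply he
              have := congrArg Fin.val hc
              simp only at this
              exact Fin.ext this.symm
          · rw [dif_neg h, if_neg]
            intro hc
            subst hc
            exact h hα
        rw [Finset.sum_congr rfl fun β _ => hre β, Finset.sum_ite_eq' Finset.univ α x]
        simp
      · rw [if_neg hα]
        apply Finset.sum_eq_zero
        intro j _
        simp only [hV, Matrix.of_apply, dif_neg hα, star_zero, zero_mul]
    have key : ((∑ i, Complex.normSq (V.mulVec x i) : ℝ) : ℂ) =
        ∑ α : Fin k, if (α : ℕ) < d then (Complex.normSq (x α) : ℂ) else 0 := by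
      rw [← inprod_self (V.mulVec x), inprod_mulVec_adj]
      rw [inprod]
      congr 1
      funext α
      rw [hVV α]
      by_cases h : (α : ℕ) < d
      · rw [if_pos h, if_pos h, ← Complex.normSq_eq_conj_mul_self]
      · rw [if_neg h, if_neg h, mul_zero]
    have key2 : (∑ i, Complex.normSq (V.mulVec x i) : ℝ) =
        ∑ α : Fin k, if (α : ℕ) < d then Complex.normSq (x α) else 0 := by
      have := key
      rw [show (∑ α : Fin k, if (α : ℕ) < d then (Complex.normSq (x α) : ℂ) else 0) =
        ((∑ α : Fin k, if (α : ℕ) < d then Complex.normSq (x α) else 0 : ℝ) : ℂ) by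
          push_cast
          congr 1
          funext α
          split <;> simp] at this
      exact_mod_cast this
    rw [key2]
    apply Finset.sum_le_sum
    intro α _
    split
    · exact le_rfl
    · exact Complex.normSq_nonneg _
    
end Compression

noncomputable section
def kronId {m k : ℕ} (V : Matrix (Fin m) (Fin k) ℂ) (p : ℕ) :
    Matrix (Fin m × Fin p) (Fin k × Fin p) ℂ :=
  Matrix.of fun q q' => V q.1 q'.1 * (if q.2 = q'.2 then 1 else 0)
end

section KronId
variable {m k p : ℕ} (V : Matrix (Fin m) (Fin k) ℂ)

lemma kronId_mulVec (a : Fin k × Fin p → ℂ) :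
    (kronId V p).mulVec a = fun q => ∑ α, V q.1 α * a (α, q.2) := by
  funext q
  simp only [kronId, Matrix.mulVec, dotProduct, Matrix.of_apply, Fintype.sum_prod_type]
  congr 1
  funext α
  rw [Finset.sum_eq_single q.2]
  · simp
  · intro s _ hs
    simp [Ne.symm hs]
  · simp

lemma kronId_conjT_mulVec (z : Fin m × Fin p → ℂ) :
    (kronId V p)ᴴ.mulVec z = fun q => ∑ i, (starRingEnd ℂ) (V i q.1) * z (i, q.2) := by
  funext q
  simp only [kronId, Matrix.mulVec, dotProduct, Matrix.conjTranspose_apply,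
    Matrix.of_apply, Fintype.sum_prod_type]
  congr 1
  funext i
  rw [Finset.sum_eq_single q.2]
  · simp [Complex.star_def]
  · intro s _ hs
    simp [hs]
  · simp

lemma compressX_apply (W : Matrix (Fin m) (Fin k) ℂ)
    (X : Matrix (Fin m × Fin p) (Fin m × Fin p) ℂ) (q q' : Fin k × Fin p) :
    ((kronId V p)ᴴ * X * kronId W p) q q' =
      ∑ i, ∑ j, (starRingEnd ℂ) (V i q.1) * W j q'.1 * X (i, q.2) (j, q'.2) := by
  rw [Matrix.mul_apply]
  have h1 : ∀ u : Fin m × Fin p, ((kronId V p)ᴴ * X) q u =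
      ∑ i, (starRingEnd ℂ) (V i q.1) * X (i, q.2) u := by
    intro u
    rw [Matrix.mul_apply, Fintype.sum_prod_type]
    congr 1
    funext i
    rw [Finset.sum_eq_single q.2]
    · simp [kronId, Complex.star_def]
    · intro s _ hs
      simp [kronId, hs]
    · simp
  simp only [h1]
  calc ∑ u : Fin m × Fin p, (∑ i, (starRingEnd ℂ) (V i q.1) * X (i, q.2) u) * kronId W p u q'
      = ∑ j, ∑ i, (starRingEnd ℂ) (V i q.1) * W j q'.1 * X (i, q.2) (j, q'.2) := by
        rw [Fintype.sum_prod_type]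
        congr 1
        funext j
        rw [Finset.sum_eq_single q'.2]
        · rw [show kronId W p (j, q'.2) q' = W j q'.1 by simp [kronId], Finset.sum_mul]
          congr 1
          funext i
          ring
        · intro t _ ht
          simp [kronId, ht]
        · simp
    _ = ∑ i, ∑ j, (starRingEnd ℂ) (V i q.1) * W j q'.1 * X (i, q.2) (j, q'.2) :=
        Finset.sum_comm

end KronId

section CompressVec
variable {m p k : ℕ}

lemma kronId_contract (V : Matrix (Fin m) (Fin k) ℂ)
    (hV : ∀ x : Fin k → ℂ, ∑ i, Complex.normSq (V.mulVec x i) ≤ ∑ α, Complex.normSq (x α))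
    (a : Fin k × Fin p → ℂ) :
    ∑ q : Fin m × Fin p, Complex.normSq ((kronId V p).mulVec a q) ≤
      ∑ q : Fin k × Fin p, Complex.normSq (a q) := by
  rw [kronId_mulVec]
  rw [Fintype.sum_prod_type]
  rw [Finset.sum_comm]
  calc ∑ s : Fin p, ∑ i : Fin m, Complex.normSq (∑ α, V i α * a (α, s))
      = ∑ s : Fin p, ∑ i : Fin m, Complex.normSq (V.mulVec (fun α => a (α, s)) i) := rfl
    _ ≤ ∑ s : Fin p, ∑ α : Fin k, Complex.normSq (a (α, s)) :=
        Finset.sum_le_sum fun s _ => hV (fun α => a (α, s))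
    _ = ∑ q : Fin k × Fin p, Complex.normSq (a q) := by
        rw [Fintype.sum_prod_type, Finset.sum_comm]

lemma compress_vec (v : Fin m × Fin p → ℂ) (hv : UnitVec v) (hSR : SchmidtRank v ≤ k) :
    ∃ (V : Matrix (Fin m) (Fin k) ℂ) (v' : Fin k × Fin p → ℂ),
      UnitVec v' ∧
      (∀ x : Fin k → ℂ, ∑ i, Complex.normSq (V.mulVec x i) ≤ ∑ α, Complex.normSq (x α)) ∧
      v = (kronId V p).mulVec v' := by
  obtain ⟨V, hF1, hF2⟩ := exists_compression (Matrix.of fun i c => v (i, c)) hSR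
  set v' : Fin k × Fin p → ℂ := (kronId V p)ᴴ.mulVec v with hv'
  have hC2 : v = (kronId V p).mulVec v' := by
    funext q
    rw [kronId_mulVec]
    have : ∀ α : Fin k, v' (α, q.2) = ∑ j, (starRingEnd ℂ) (V j α) * v (j, q.2) := by
      intro α
      rw [hv', kronId_conjT_mulVec]
    simp only [this]
    exact (hF1 q.1 q.2).symm
  refine ⟨V, v', ?_, hF2, hC2⟩
  rw [UnitVec, hv', inprod_mulVec_adj, Matrix.conjTranspose_conjTranspose, ← hv', ← hC2]
  exact hv

end CompressVec

section TensorCompress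
variable {m k r n : ℕ}

lemma tensorId_compress (Φ : Matrix (Fin r) (Fin r) ℂ →ₗ[ℂ] Matrix (Fin n) (Fin n) ℂ)
    (X : Matrix (Fin m × Fin r) (Fin m × Fin r) ℂ) (V W : Matrix (Fin m) (Fin k) ℂ) :
    tensorId Φ ((kronId V r)ᴴ * X * kronId W r) =
      (kronId V n)ᴴ * tensorId Φ X * kronId W n := by
  funext q q'
  rw [compressX_apply]
  show Φ (Matrix.of fun s t => ((kronId V r)ᴴ * X * kronId W r) (q.1, s) (q'.1, t)) q.2 q'.2 = _
  have hin : (Matrix.of fun s t => ((kronId V r)ᴴ * X * kronId W r) (q.1, s) (q'.1, t)) =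
      ∑ i, ∑ j, ((starRingEnd ℂ) (V i q.1) * W j q'.1) •
        (Matrix.of fun s t => X (i, s) (j, t)) := by
    funext s t
    simp only [Matrix.of_apply]
    rw [compressX_apply]
    simp only [Matrix.sum_apply, Matrix.smul_apply, Matrix.of_apply, smul_eq_mul]
  rw [hin]
  simp only [map_sum, _root_.map_smul, Matrix.sum_apply, Matrix.smul_apply, smul_eq_mul]
  rfl

end TensorCompress

section KeyStep
variable {m r n k : ℕ}

lemma key_step (hm : 0 < m) (hr : 0 < r) (hn : 0 < n) (hk : 0 < k)
    (Φ : Matrix (Fin r) (Fin r) ℂ →ₗ[ℂ] Matrix (Fin n) (Fin n) ℂ)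
    (X : Matrix (Fin m × Fin r) (Fin m × Fin r) ℂ) (hX : opNorm X ≤ 1)
    (v w : Fin m × Fin n → ℂ) (hv : UnitVec v) (hw : UnitVec w)
    (hsv : SchmidtRank v ≤ k) (hsw : SchmidtRank w ≤ k) :
    ∃ X' : Matrix (Fin k × Fin r) (Fin k × Fin r) ℂ, opNorm X' ≤ 1 ∧
      ‖inprod v ((tensorId Φ X).mulVec w)‖ ≤ opNorm (tensorId Φ X') := by
  haveI := Fin.pos_iff_nonempty.mp hm
  haveI := Fin.pos_iff_nonempty.mp hr
  haveI := Fin.pos_iff_nonempty.mp hn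
  haveI := Fin.pos_iff_nonempty.mp hk
  obtain ⟨V, v', hv', hVc, hvlift⟩ := compress_vec v hv hsv
  obtain ⟨W, w', hw', hWc, hwlift⟩ := compress_vec w hw hsw
  refine ⟨(kronId V r)ᴴ * X * kronId W r, ?_, ?_⟩
  · apply opNorm_le
    intro a b ha hb
    rw [← Matrix.mulVec_mulVec, ← Matrix.mulVec_mulVec, ← inprod_mulVec_adj]
    apply abs_inprod_le_one X hX
    · rw [unitVec_iff] at ha
      exact le_trans (kronId_contract V hVc a) (le_of_eq ha)
    · rw [unitVec_iff] at hb
      exact le_trans (kronId_contract W hWc b) (le_of_eq hb)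
  · rw [tensorId_compress, hvlift, hwlift, inprod_mulVec_adj,
      Matrix.mulVec_mulVec, Matrix.mulVec_mulVec]
    exact abs_le_opNorm _ hv' hw'

end KeyStep

section Small
variable {m p k : ℕ}

lemma schmidtRank_single (hm : 0 < m) (hp : 0 < p) (i0 : Fin m) (j0 : Fin p) :
    SchmidtRank (Pi.single (i0, j0) 1 : Fin m × Fin p → ℂ) ≤ 1 := by
  have hM : (Matrix.of fun i j => (Pi.single (i0, j0) 1 : Fin m × Fin p → ℂ) (i, j)) =
      Matrix.vecMulVec (Pi.single i0 1) (Pi.single j0 1) := by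
    funext i j
    simp only [Matrix.of_apply, Matrix.vecMulVec_apply, Pi.single_apply, Prod.mk.injEq]
    by_cases h1 : i = i0 <;> by_cases h2 : j = j0 <;> simp [h1, h2]
  rw [SchmidtRank, hM, Matrix.vecMulVec_eq (Fin 1)]
  exact le_trans (Matrix.rank_mul_le_left _ _)
    (le_trans (Matrix.rank_le_card_width _) (by simp))

lemma schmidtRank_le_left (v : Fin k × Fin p → ℂ) : SchmidtRank v ≤ k :=
  le_trans (Matrix.rank_le_card_height _) (by simp)

lemma exists_SR_unit (hm : 0 < m) (hp : 0 < p) (hk : 0 < k) :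
    ∃ v : Fin m × Fin p → ℂ, UnitVec v ∧ SchmidtRank v ≤ k := by
  refine ⟨Pi.single (⟨0, hm⟩, ⟨0, hp⟩) 1, unitVec_single _, ?_⟩
  exact le_trans (schmidtRank_single hm hp _ _) hk

lemma bddAbove_SNormSet (X : Matrix ((Fin m × Fin p)) ((Fin m × Fin p)) ℂ) (k : ℕ) :
    BddAbove { t : ℝ | ∃ v w : Fin m × Fin p → ℂ, UnitVec v ∧ UnitVec w ∧
      SchmidtRank v ≤ k ∧ SchmidtRank w ≤ k ∧
      t = ‖inprod v (X.mulVec w)‖ } := by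
  obtain ⟨c, hc⟩ := bddAbove_opNormSet X
  refine ⟨c, ?_⟩
  rintro t ⟨v, w, hv, hw, -, -, rfl⟩
  exact hc ⟨v, w, hv, hw, rfl⟩

lemma SNorm_le (hm : 0 < m) (hp : 0 < p) (hk : 0 < k)
    (X : Matrix ((Fin m × Fin p)) ((Fin m × Fin p)) ℂ) {c : ℝ}
    (h : ∀ v w : Fin m × Fin p → ℂ, UnitVec v → UnitVec w →
      SchmidtRank v ≤ k → SchmidtRank w ≤ k →
      ‖inprod v (X.mulVec w)‖ ≤ c) :
    SNorm k X ≤ c := by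
  apply csSup_le
  · obtain ⟨v, hv, hsv⟩ := exists_SR_unit hm hp hk
    exact ⟨_, v, v, hv, hv, hsv, hsv, rfl⟩
  · rintro t ⟨v, w, hv, hw, hsv, hsw, rfl⟩
    exact h v w hv hw hsv hsw

lemma opNorm_zero {I J : Type*} [Fintype I] [Fintype J] [DecidableEq I] [DecidableEq J]
    [Nonempty I] [Nonempty J] : opNorm (0 : Matrix I J ℂ) = 0 := by
  apply le_antisymm
  · apply opNorm_le
    intro v w _ _
    simp [inprod, Matrix.zero_mulVec]
  · exact opNorm_nonneg 0

lemma SNorm_eq_opNorm {p : ℕ} (X : Matrix ((Fin k × Fin p)) ((Fin k × Fin p)) ℂ) :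
    SNorm k X = opNorm X := by
  rw [SNorm, opNorm]
  congr 1
  ext t
  constructor
  · rintro ⟨v, w, hv, hw, -, -, rfl⟩
    exact ⟨v, w, hv, hw, rfl⟩
  · rintro ⟨v, w, hv, hw, rfl⟩
    exact ⟨v, w, hv, hw, schmidtRank_le_left v, schmidtRank_le_left w, rfl⟩

end Small

section Final
variable {m r n k : ℕ}

lemma tensorId_zero (Φ : Matrix (Fin r) (Fin r) ℂ →ₗ[ℂ] Matrix (Fin n) (Fin n) ℂ) :
    tensorId (I := Fin m) Φ 0 = 0 := by
  funext q q'
  show Φ (Matrix.of fun s t => (0 : Matrix (Fin m × Fin r) (Fin m × Fin r) ℂ) (q.1, s) (q'.1, t))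
      q.2 q'.2 = 0
  have h : (Matrix.of fun s t => (0 : Matrix (Fin m × Fin r) (Fin m × Fin r) ℂ) (q.1, s)
      (q'.1, t)) = 0 := by
    funext s t
    rfl
  rw [h, map_zero]
  rfl

lemma SNorm_zero (hm : 0 < m) (hp : 0 < n) (hk : 0 < k) :
    SNorm k (0 : Matrix ((Fin m × Fin n)) ((Fin m × Fin n)) ℂ) = 0 := by
  apply le_antisymm
  · apply SNorm_le hm hp hk
    intro v w _ _ _ _
    simp [inprod, Matrix.zero_mulVec]
  · obtain ⟨v, hv, hsv⟩ := exists_SR_unit hm hp hk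
    exact le_csSup (bddAbove_SNormSet 0 k)
      ⟨v, v, hv, hv, hsv, hsv, by simp [inprod, Matrix.zero_mulVec]⟩

lemma tensorId_opNorm_bound (hk : 0 < k) (hr : 0 < r) (hn : 0 < n)
    (Φ : Matrix (Fin r) (Fin r) ℂ →ₗ[ℂ] Matrix (Fin n) (Fin n) ℂ)
    (X : Matrix (Fin k × Fin r) (Fin k × Fin r) ℂ) (hX : opNorm X ≤ 1) :
    opNorm (tensorId Φ X) ≤ ∑ q : Fin k × Fin n, ∑ q' : Fin k × Fin n, ∑ s : Fin r, ∑ t : Fin r,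
      ‖Φ (Matrix.single s t 1) q.2 q'.2‖ := by
  haveI := Fin.pos_iff_nonempty.mp hk
  haveI := Fin.pos_iff_nonempty.mp hr
  haveI := Fin.pos_iff_nonempty.mp hn
  refine le_trans (opNorm_le_sum _) ?_
  apply Finset.sum_le_sum
  intro q _
  apply Finset.sum_le_sum
  intro q' _
  show ‖Φ (Matrix.of fun s t => X (q.1, s) (q'.1, t)) q.2 q'.2‖ ≤ _
  have hdecomp : (Matrix.of fun s t => X (q.1, s) (q'.1, t)) =
      ∑ s, ∑ t, X (q.1, s) (q'.1, t) • Matrix.single s t 1 := by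
    conv_lhs => rw [Matrix.matrix_eq_sum_single (Matrix.of fun s t => X (q.1, s) (q'.1, t))]
    congr 1
    funext s
    congr 1
    funext t
    rw [Matrix.smul_single, smul_eq_mul, mul_one]
    rfl
  rw [hdecomp]
  simp only [map_sum, _root_.map_smul, Matrix.sum_apply, Matrix.smul_apply, smul_eq_mul]
  refine le_trans (norm_sum_le _ _) ?_
  apply Finset.sum_le_sum
  intro s _
  refine le_trans (norm_sum_le _ _) ?_
  apply Finset.sum_le_sum
  intro t _
  rw [norm_mul]
  calc ‖X (q.1, s) (q'.1, t)‖ * ‖Φ (Matrix.single s t 1) q.2 q'.2‖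
      ≤ 1 * ‖Φ (Matrix.single s t 1) q.2 q'.2‖ := by
        apply mul_le_mul_of_nonneg_right _ (norm_nonneg _)
        exact le_trans (entry_abs_le_opNorm X _ _) hX
    _ = _ := one_mul _

theorem cb_kMinimal_norm_stabilizes' (r n k : ℕ) (hr : 0 < r) (hk : 1 ≤ k) (hkn : k ≤ n)
    (Φ : Matrix (Fin r) (Fin r) ℂ →ₗ[ℂ] Matrix (Fin n) (Fin n) ℂ) :
    sSup { t : ℝ | ∃ (m : ℕ), 0 < m ∧ ∃ X : Matrix (Fin m × Fin r) (Fin m × Fin r) ℂ,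
        opNorm X ≤ 1 ∧ t = SNorm k (tensorId Φ X) } =
      sSup { t : ℝ | ∃ X : Matrix (Fin k × Fin r) (Fin k × Fin r) ℂ,
        opNorm X ≤ 1 ∧ t = opNorm (tensorId Φ X) } := by
  have hk0 : 0 < k := hk
  have hn : 0 < n := lt_of_lt_of_le hk0 hkn
  haveI := Fin.pos_iff_nonempty.mp hk0
  haveI := Fin.pos_iff_nonempty.mp hr
  haveI := Fin.pos_iff_nonempty.mp hn
  set A := { t : ℝ | ∃ (m : ℕ), 0 < m ∧ ∃ X : Matrix (Fin m × Fin r) (Fin m × Fin r) ℂ,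
      opNorm X ≤ 1 ∧ t = SNorm k (tensorId Φ X) } with hA
  set B := { t : ℝ | ∃ X : Matrix (Fin k × Fin r) (Fin k × Fin r) ℂ,
      opNorm X ≤ 1 ∧ t = opNorm (tensorId Φ X) } with hB
  have hBne : B.Nonempty := by
    refine ⟨0, 0, ?_, ?_⟩
    · rw [opNorm_zero]; exact zero_le_one
    · rw [tensorId_zero, opNorm_zero]
  have hBbdd : BddAbove B := by
    refine ⟨∑ q : Fin k × Fin n, ∑ q' : Fin k × Fin n, ∑ s : Fin r, ∑ t : Fin r,
      ‖Φ (Matrix.single s t 1) q.2 q'.2‖, ?_⟩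
    rintro t ⟨X, hX, rfl⟩
    exact tensorId_opNorm_bound hk0 hr hn Φ X hX
  have hstep : ∀ t ∈ A, t ≤ sSup B := by
    rintro t ⟨m, hm, X, hX, rfl⟩
    apply SNorm_le hm hn hk0 (tensorId Φ X)
    intro v w hv hw hsv hsw
    obtain ⟨X', hX', hle⟩ := key_step hm hr hn hk0 Φ X hX v w hv hw hsv hsw
    exact le_trans hle (le_csSup hBbdd ⟨X', hX', rfl⟩)
  have hAne : A.Nonempty := by
    refine ⟨0, 1, one_pos, 0, ?_, ?_⟩
    · rw [opNorm_zero]; exact zero_le_one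
    · rw [tensorId_zero, SNorm_zero one_pos hn hk0]
  apply le_antisymm
  · exact csSup_le hAne hstep
  · refine csSup_le_csSup ⟨sSup B, hstep⟩ hBne ?_
    rintro t ⟨X, hX, rfl⟩
    exact ⟨k, hk0, X, hX, (SNorm_eq_opNorm _).symm⟩

end Final


/-- Theorem 6.1: the completely bounded norm from `M_r` to the `k`-minimal operator space
`MIN^k(M_n)` stabilizes and equals `‖id_k ⊗ Φ‖`. -/
theorem cb_kMinimal_norm_stabilizes (r n k : ℕ) (hr : 0 < r) (hk : 1 ≤ k) (hkn : k ≤ n)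
    (Φ : Matrix (Fin r) (Fin r) ℂ →ₗ[ℂ] Matrix (Fin n) (Fin n) ℂ) :
    sSup { t : ℝ | ∃ (m : ℕ), 0 < m ∧ ∃ X : Matrix (Fin m × Fin r) (Fin m × Fin r) ℂ,
        opNorm X ≤ 1 ∧ t = SNorm k (tensorId Φ X) } =
      sSup { t : ℝ | ∃ X : Matrix (Fin k × Fin r) (Fin k × Fin r) ℂ,
        opNorm X ≤ 1 ∧ t = opNorm (tensorId Φ X) } :=
  cb_kMinimal_norm_stabilizes' r n k hr hk hkn Φ
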